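/- The number of plane trees with n edges whose height (maximum vertex height) equals k is the same as the number of plane trees T with n edges for which the maximum right spanning width over all internal vertices, rsw(T), equals k. -/

import Mathlib

/-- A plane tree: a root together with a linearly ordered list of subtrees. -/
inductive PlaneTree : Type
  | node : List PlaneTree → PlaneTree

namespace PlaneTree

/-- Total number of edges in a forest (list of plane trees), counting the edges from
the virtual roots to their children. -/
def edgesList : List PlaneTree → ℕ
  | [] => 0
  | node cs :: ts => cs.length + edgesList cs + edgesList ts

/-- Number of edges of a plane tree. -/
def edgeCount (t : PlaneTree) : ℕ := edgesList [t]

/-- Multiset of heights of all vertices of a forest whose roots are at height `h`. -/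
def heightsList (h : ℕ) : List PlaneTree → Multiset ℕ
  | [] => 0
  | node cs :: ts => {h} + heightsList (h + 1) cs + heightsList h ts

/-- Multiset of the heights of all vertices of a plane tree (root at height 0). -/
def vertexHeights (t : PlaneTree) : Multiset ℕ := heightsList 0 [t]

/-- Multiset of heights of the leaves (childless vertices) of a forest whose roots are
at height `h`. -/
def leafHeightsList (h : ℕ) : List PlaneTree → Multiset ℕ
  | [] => 0
  | node cs :: ts =>
      (if cs.isEmpty then ({h} : Multiset ℕ) else 0) + leafHeightsList (h + 1) cs + leafHeightsList h ts

/-- Multiset of the heights of the leaves (childless non-root vertices) of a plane tree. -/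
def leafHeights : PlaneTree → Multiset ℕ
  | node cs => leafHeightsList 1 cs

/-- Multiset of outdegrees of the internal vertices (vertices with at least one child)
of a forest. -/
def outdegList : List PlaneTree → Multiset ℕ
  | [] => 0
  | node cs :: ts => (if cs.isEmpty then 0 else ({cs.length} : Multiset ℕ)) + outdegList cs + outdegList ts

/-- Multiset of the outdegrees of the internal vertices of a plane tree. -/
def internalOutdegs (t : PlaneTree) : Multiset ℕ := outdegList [t]

/-- Right spanning widths of all vertices of a forest, where `a` is the number of edges
attached from the right-hand side to the path from the forest's (virtual) root upwards.
A root `node cs` of the forest followed by `ts` has `ts.length` right siblings, so its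
right spanning width is `cs.length + a + ts.length`. -/
def rswList (a : ℕ) : List PlaneTree → Multiset ℕ
  | [] => 0
  | node cs :: ts =>
      {cs.length + a + ts.length} + rswList (a + ts.length) cs + rswList a ts

/-- Multiset of the right spanning widths of all vertices of a plane tree. -/
def vertexRSW : PlaneTree → Multiset ℕ
  | node cs => {cs.length} + rswList 0 cs

/-- Right spanning widths of the internal vertices of a forest (see `rswList`). -/
def rswIntList (a : ℕ) : List PlaneTree → Multiset ℕ
  | [] => 0
  | node cs :: ts =>
      (if cs.isEmpty then 0 else ({cs.length + a + ts.length} : Multiset ℕ)) +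
        rswIntList (a + ts.length) cs + rswIntList a ts

/-- Multiset of the right spanning widths of the internal vertices of a plane tree. -/
def internalRSW : PlaneTree → Multiset ℕ
  | node cs => (if cs.isEmpty then 0 else ({cs.length} : Multiset ℕ)) + rswIntList 0 cs

/-- swap of the rotation (first-child/next-sibling) binary encoding -/
def psi : List PlaneTree → List PlaneTree
  | [] => []
  | node cs :: ts => node (psi ts) :: psi cs

/-- mirror of a forest -/
def mu : List PlaneTree → List PlaneTree
  | [] => []
  | node cs :: ts => mu ts ++ [node (mu cs)]

theorem psi_psi : ∀ f, psi (psi f) = f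
  | [] => by simp [psi, mu, edgesList]
  | node cs :: ts => by simp [psi, psi_psi cs, psi_psi ts]

theorem mu_append : ∀ (f : List PlaneTree) (u : List PlaneTree),
    mu (f ++ [node u]) = node (mu u) :: mu f
  | [], u => by simp [mu]
  | node cs :: ts, u => by
    show mu (node cs :: (ts ++ [node u])) = _
    rw [mu, mu_append ts u]
    simp [mu]

theorem mu_mu : ∀ f, mu (mu f) = f
  | [] => by simp [psi, mu, edgesList]
  | node cs :: ts => by rw [mu, mu_append, mu_mu cs, mu_mu ts]

theorem edgesList_append : ∀ f g : List PlaneTree,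
    edgesList (f ++ g) = edgesList f + edgesList g
  | [], g => by simp [edgesList]
  | node cs :: ts, g => by
    show edgesList (node cs :: (ts ++ g)) = _
    rw [edgesList, edgesList_append ts g, edgesList]; ring

theorem nverts_psi : ∀ f, (psi f).length + edgesList (psi f) = f.length + edgesList f
  | [] => by simp [psi, mu, edgesList]
  | node cs :: ts => by
    have h1 := nverts_psi cs
    have h2 := nverts_psi ts
    simp only [psi, edgesList, List.length_cons]
    omega

theorem nverts_mu : ∀ f, (mu f).length + edgesList (mu f) = f.length + edgesList f
  | [] => by simp [psi, mu, edgesList]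
  | node cs :: ts => by
    have h1 := nverts_mu cs
    have h2 := nverts_mu ts
    simp only [mu, edgesList, List.length_cons, List.length_append, List.length_nil,
      edgesList_append, List.length_singleton]
    omega


theorem rswIntList_shift : ∀ (f : List PlaneTree) (a : ℕ),
    rswIntList a f = (rswIntList 0 f).map (· + a)
  | [], a => by simp [rswIntList]
  | node cs :: ts, a => by
    rw [rswIntList, rswIntList, rswIntList_shift cs (a + ts.length),
      rswIntList_shift cs (0 + ts.length), rswIntList_shift ts a]
    simp only [Multiset.map_add, Multiset.map_map, Function.comp_def]
    have h1 : ((fun x => x + a) ∘ fun x => x + (0 + ts.length)) = (fun x : ℕ => x + (a + ts.length)) := by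
      funext x; simp; omega
    have h2 : (fun x : ℕ => x + (0 + ts.length) + a) = (fun x : ℕ => x + (a + ts.length)) := by
      funext x; omega
    rw [h2]
    congr 2
    cases h : cs.isEmpty
    · simp only [h, Bool.false_eq_true, if_false, Multiset.map_singleton]
      congr 1
      omega
    · simp [h]

theorem sup_map_add (m : Multiset ℕ) (a : ℕ) :
    (m.map (· + a)).sup = if m = 0 then 0 else m.sup + a := by
  induction m using Multiset.induction_on with
  | empty => simp
  | cons x s ih =>
    rw [Multiset.map_cons, Multiset.sup_cons, Multiset.sup_cons, ih,
      if_neg (Multiset.cons_ne_zero)]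
    by_cases h : s = 0
    · subst h
      rw [if_pos rfl]
      simp only [Multiset.sup_zero, Nat.bot_eq_zero]
      omega
    · rw [if_neg h]
      omega

theorem rswIntList_sup (f : List PlaneTree) (a : ℕ) :
    (rswIntList a f).sup = if rswIntList 0 f = 0 then 0 else (rswIntList 0 f).sup + a := by
  rw [rswIntList_shift, sup_map_add]

theorem rswIntList_append_singleton : ∀ (f : List PlaneTree) (a : ℕ) (t : PlaneTree),
    rswIntList a (f ++ [t]) = rswIntList (a + 1) f + rswIntList a [t]
  | [], a, t => by simp [rswIntList]
  | node cs :: ts, a, t => by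
    show rswIntList a (node cs :: (ts ++ [t])) = _
    rw [rswIntList, rswIntList_append_singleton ts a t, rswIntList]
    simp only [List.length_append, List.length_singleton]
    have h1 : a + (ts.length + 1) = a + 1 + ts.length := by omega
    rw [h1]
    have h2 : cs.length + a + (ts.length + 1) = cs.length + (a + 1) + ts.length := by omega
    rw [h2]
    abel

/-- height of forest: 1 + max vertex height (roots at height 0); 0 for empty forest -/
def hf : List PlaneTree → ℕ
  | [] => 0
  | node cs :: ts => max (hf cs + 1) (hf ts)

theorem heightsList_sup : ∀ (f : List PlaneTree) (d : ℕ),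
    (heightsList (d + 1) f).sup = if f.isEmpty then 0 else d + hf f
  | [], d => by simp [heightsList]
  | node cs :: ts, d => by
    rw [heightsList, Multiset.sup_add, Multiset.sup_add, Multiset.sup_singleton,
      heightsList_sup cs (d + 1), heightsList_sup ts d]
    simp only [List.isEmpty_cons, Bool.false_eq_true, if_false, hf]
    cases hc : cs.isEmpty <;> cases ht : ts.isEmpty <;>
      simp only [Bool.false_eq_true, if_false, if_true] <;>
      first
        | omega
        | (first
            | (rw [List.isEmpty_iff] at hc; rw [hc]; simp [hf] <;> omega)
            | (rw [List.isEmpty_iff] at ht; rw [ht]; simp [hf]; omega)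
            | (rw [List.isEmpty_iff] at hc ht; rw [hc, ht]; simp [hf]))

/-- sup of internal right spanning widths of `node g` -/
def S (g : List PlaneTree) : ℕ :=
  max (if g.isEmpty then 0 else g.length) ((rswIntList 0 g).sup)

theorem aux_max (g : List PlaneTree) :
    max (g.length + 1) ((rswIntList 1 g).sup) = S g + 1 := by
  rw [rswIntList_sup g 1, S]
  by_cases hz : rswIntList 0 g = 0
  · rw [if_pos hz, hz, Multiset.sup_zero]
    cases g with
    | nil => simp
    | cons t ts =>
      simp only [List.isEmpty_cons, Bool.false_eq_true, if_false,
        Nat.bot_eq_zero, List.length_cons]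
      omega
  · rw [if_neg hz]
    have hge : g.isEmpty = false := by
      cases g with
      | nil => simp [rswIntList] at hz
      | cons t ts => rfl
    rw [hge]
    simp only [Bool.false_eq_true, if_false]
    omega

theorem main_key : ∀ f : List PlaneTree, S (mu (psi f)) = hf f
  | [] => by simp [psi, mu, S, rswIntList, hf]
  | node cs :: ts => by
    have IHc := main_key cs
    have IHt := main_key ts
    have hstep : mu (psi (node cs :: ts)) = mu (psi cs) ++ [node (mu (psi ts))] := by
      rw [psi, mu]
    rw [hstep]
    set g := mu (psi cs) with hg
    set u := mu (psi ts) with hu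
    have hlen : (g ++ [node u]).isEmpty = false := by
      cases g <;> simp
    have hrsw : rswIntList 0 (g ++ [node u]) =
        rswIntList 1 g + rswIntList 0 [node u] := by
      rw [rswIntList_append_singleton]
    have hsingle : (rswIntList 0 [node u]).sup =
        max (if u.isEmpty then 0 else u.length) ((rswIntList 0 u).sup) := by
      rw [rswIntList, rswIntList]
      simp only [List.length_nil, add_zero, Multiset.sup_add, Multiset.sup_zero]
      cases h : u.isEmpty <;>
        simp [h] <;> omega
    rw [S, hlen, if_neg (by simp), hrsw, Multiset.sup_add, hsingle]
    rw [S] at IHc IHt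
    rw [hf, ← IHc, ← IHt]
    have haux := aux_max g
    rw [S] at haux
    simp only [List.length_append, List.length_singleton] at haux ⊢
    omega


theorem sup_vertexHeights (cs : List PlaneTree) :
    (vertexHeights (node cs)).sup = hf cs := by
  rw [vertexHeights, heightsList, heightsList]
  simp only [Multiset.sup_add, Multiset.sup_singleton, Multiset.sup_zero]
  rw [heightsList_sup cs 0]
  cases h : cs.isEmpty
  · simp only [Bool.false_eq_true, if_false, Nat.bot_eq_zero]
    omega
  · rw [List.isEmpty_iff] at h
    subst h
    simp [hf]

theorem sup_internalRSW (g : List PlaneTree) :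
    (internalRSW (node g)).sup = S g := by
  rw [internalRSW, Multiset.sup_add, S]
  cases h : g.isEmpty
  · simp only [h, Bool.false_eq_true, if_false, Multiset.sup_singleton]
  · simp only [h, if_true, Multiset.sup_zero, Nat.bot_eq_zero]

/-- the bijection on plane trees -/
def phiT : PlaneTree → PlaneTree
  | node cs => node (mu (psi cs))

def psiT : PlaneTree → PlaneTree
  | node cs => node (psi (mu cs))

theorem phiT_psiT : ∀ T, phiT (psiT T) = T
  | node cs => by rw [psiT, phiT, psi_psi, mu_mu]

theorem psiT_phiT : ∀ T, psiT (phiT T) = T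
  | node cs => by rw [phiT, psiT, mu_mu, psi_psi]

theorem edgeCount_phiT : ∀ T, edgeCount (phiT T) = edgeCount T
  | node cs => by
    rw [phiT, edgeCount, edgeCount, edgesList, edgesList]
    have h1 := nverts_psi cs
    have h2 := nverts_mu (psi cs)
    simp only [edgesList] at *
    omega

theorem sup_internalRSW_phiT : ∀ T, (internalRSW (phiT T)).sup = (vertexHeights T).sup
  | node cs => by
    rw [phiT, sup_internalRSW, sup_vertexHeights, main_key]

end PlaneTree

open PlaneTree

/-- The number of plane trees with `n` edges whose height (maximum vertex height) is `k`
equals the number of plane trees `T` with `n` edges with `rsw(T) = k`, where `rsw(T)` is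
the maximum right spanning width over the internal vertices of `T`. -/
theorem stmt17 (n k : ℕ) :
    Nat.card {T : PlaneTree // edgeCount T = n ∧ (vertexHeights T).sup = k} =
      Nat.card {T : PlaneTree // edgeCount T = n ∧ (internalRSW T).sup = k} := by
  apply Nat.card_congr
  exact
    { toFun := fun x => ⟨phiT x.1, by
        rw [edgeCount_phiT, sup_internalRSW_phiT]; exact x.2⟩
      invFun := fun x => ⟨psiT x.1, by
        obtain ⟨h1, h2⟩ := x.2
        refine ⟨?_, ?_⟩
        · rw [← phiT_psiT x.1] at h1; rw [← edgeCount_phiT]; exact h1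
        · rw [← phiT_psiT x.1] at h2; rw [← sup_internalRSW_phiT]; exact h2⟩
      left_inv := fun x => Subtype.ext (psiT_phiT x.1)
      right_inv := fun x => Subtype.ext (phiT_psiT x.1) }
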